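/- arXiv:2004.05581 — 3 statements merged into one kernel-verified Lean document; each statement's English description precedes it below -/
import Mathlib

section
/- Let G be a group, K a subgroup of G of finite index, α : G → ℂˣ a character of G, and (ρ, W) a representation of K on a finite-dimensional complex vector space W. Let V = { f : G → W | f(kg) = ρ(k)(f(g)) for all k ∈ K, g ∈ G } be the induced representation of ρ to G, on which G acts by (σ(g)f)(x) = f(xg). If B is a nondegenerate alternating bilinear form on W satisfying B(ρ(k)w, ρ(k)w') = α(k)·B(w,w') for all k ∈ K and w, w' ∈ W, then there exists a nondegenerate alternating bilinear form B̃ on V satisfying B̃(σ(g)f, σ(g)f') = α(g)·B̃(f,f') for all g ∈ G and f, f' ∈ V. (This is the α-symplectic case of Lemma 'lemma ref' of the paper: induction from a finite-index subgroup preserves α-symplecticity; the form B̃(f,f') = Σ_{Kg ∈ K\G} α(g)⁻¹·B(f(g), f'(g)) works.) -/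
/-- The space of the representation of `G` induced from a representation `ρ` of a subgroup
`K ≤ G` on `W`: the submodule of functions `f : G → W` with `f (k * g) = ρ k (f g)` for all
`k ∈ K`, `g ∈ G`. -/
def inducedSubmodule {G : Type*} [Group G] (K : Subgroup G) {W : Type*} [AddCommGroup W]
    [Module ℂ W] (ρ : K →* (W ≃ₗ[ℂ] W)) : Submodule ℂ (G → W) where
  carrier := {f | ∀ (k : K) (g : G), f ((k : G) * g) = ρ k (f g)}
  add_mem' {f f'} hf hf' := fun k g => by
    simp only [Pi.add_apply, hf k g, hf' k g, map_add]
  zero_mem' := fun k g => by simp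
  smul_mem' c f hf := fun k g => by
    simp only [Pi.smul_apply, hf k g, map_smul]

/-- The action of `g : G` on the induced space: `(σ g f) x = f (x * g)`. -/
def inducedAction {G : Type*} [Group G] (K : Subgroup G) {W : Type*} [AddCommGroup W]
    [Module ℂ W] (ρ : K →* (W ≃ₗ[ℂ] W)) (g : G) :
    inducedSubmodule K ρ →ₗ[ℂ] inducedSubmodule K ρ where
  toFun f := ⟨fun x => (f : G → W) (x * g), fun k x => by
    simpa [mul_assoc] using f.2 k (x * g)⟩
  map_add' f f' := by ext x; simp
  map_smul' c f := by ext x; simp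

/-- **Lemma (induction preserves `α`-symplecticity).** Let `K` be a finite-index subgroup of a
group `G`, `α : G → ℂˣ` a character, and `(ρ, W)` a finite-dimensional complex representation
of `K` carrying a nondegenerate alternating `α|_K`-equivariant bilinear form `B`. Then the
induced representation of `G` carries a nondegenerate alternating `α`-equivariant bilinear
form. -/
theorem induced_symplectic
    {G : Type*} [Group G] (K : Subgroup G) (hK : K.FiniteIndex)
    {W : Type*} [AddCommGroup W] [Module ℂ W] [FiniteDimensional ℂ W]
    (ρ : K →* (W ≃ₗ[ℂ] W)) (α : G →* ℂˣ)
    (B : W →ₗ[ℂ] W →ₗ[ℂ] ℂ)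
    (hnondeg : ∀ w : W, (∀ w' : W, B w w' = 0) → w = 0)
    (halt : ∀ w : W, B w w = 0)
    (hequiv : ∀ (k : K) (w w' : W), B (ρ k w) (ρ k w') = (α (k : G) : ℂ) * B w w') :
    ∃ Bt : inducedSubmodule K ρ →ₗ[ℂ] inducedSubmodule K ρ →ₗ[ℂ] ℂ,
      (∀ f : inducedSubmodule K ρ, (∀ f' : inducedSubmodule K ρ, Bt f f' = 0) → f = 0) ∧
      (∀ f : inducedSubmodule K ρ, Bt f f = 0) ∧
      (∀ (g : G) (f f' : inducedSubmodule K ρ),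
        Bt (inducedAction K ρ g f) (inducedAction K ρ g f') = (α g : ℂ) * Bt f f') := by
  classical
  haveI : Finite (G ⧸ K) := K.finite_quotient_of_finiteIndex
  haveI : Finite (Quotient (QuotientGroup.rightRel K)) :=
    Finite.of_equiv _ (QuotientGroup.quotientRightRelEquivQuotientLeftRel K).symm
  haveI : Fintype (Quotient (QuotientGroup.rightRel K)) := Fintype.ofFinite _
  set φ : inducedSubmodule K ρ → inducedSubmodule K ρ → G → ℂ :=
    fun f f' g => ((α g : ℂ))⁻¹ * B ((f : G → W) g) ((f' : G → W) g) with hφdef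
  have hα : ∀ g : G, (α g : ℂ) ≠ 0 := fun g => (α g).ne_zero
  have hφ : ∀ (f f' : inducedSubmodule K ρ) (a b : G),
      (QuotientGroup.rightRel K) a b → φ f f' a = φ f f' b := by
    intro f f' a b hab
    rw [QuotientGroup.rightRel_apply] at hab
    set k : K := ⟨b * a⁻¹, hab⟩ with hk
    have hb : (k : G) * a = b := by simp [hk]
    have h1 : (f : G → W) b = ρ k ((f : G → W) a) := by rw [← hb]; exact f.2 k a
    have h2 : (f' : G → W) b = ρ k ((f' : G → W) a) := by rw [← hb]; exact f'.2 k a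
    have hαb : (α b : ℂ) = (α (k : G) : ℂ) * (α a : ℂ) := by
      rw [← hb]; push_cast [map_mul]; ring
    simp only [hφdef, h1, h2, hequiv k, hαb, mul_inv_rev]
    field_simp
  set ψ : inducedSubmodule K ρ → inducedSubmodule K ρ →
      Quotient (QuotientGroup.rightRel K) → ℂ :=
    fun f f' q => Quotient.liftOn q (φ f f') (hφ f f') with hψdef
  set S : inducedSubmodule K ρ → inducedSubmodule K ρ → ℂ :=
    fun f f' => ∑ q, ψ f f' q with hSdef
  have hSadd₁ : ∀ f₁ f₂ f', S (f₁ + f₂) f' = S f₁ f' + S f₂ f' := by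
    intro f₁ f₂ f'
    rw [hSdef, ← Finset.sum_add_distrib]
    refine Finset.sum_congr rfl fun q _ => ?_
    induction q using Quotient.inductionOn with
    | h a => simp [hψdef, hφdef, mul_add]
  have hSsmul₁ : ∀ (c : ℂ) f f', S (c • f) f' = c * S f f' := by
    intro c f f'
    rw [hSdef, Finset.mul_sum]
    refine Finset.sum_congr rfl fun q _ => ?_
    induction q using Quotient.inductionOn with
    | h a => simp [hψdef, hφdef]; ring
  have hSadd₂ : ∀ f f₁ f₂, S f (f₁ + f₂) = S f f₁ + S f f₂ := by
    intro f f₁ f₂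
    rw [hSdef, ← Finset.sum_add_distrib]
    refine Finset.sum_congr rfl fun q _ => ?_
    induction q using Quotient.inductionOn with
    | h a => simp [hψdef, hφdef, mul_add]
  have hSsmul₂ : ∀ (c : ℂ) f f', S f (c • f') = c * S f f' := by
    intro c f f'
    rw [hSdef, Finset.mul_sum]
    refine Finset.sum_congr rfl fun q _ => ?_
    induction q using Quotient.inductionOn with
    | h a => simp [hψdef, hφdef]; ring
  refine ⟨LinearMap.mk₂ ℂ S hSadd₁ hSsmul₁ hSadd₂ hSsmul₂, ?_, ?_, ?_⟩
  · -- nondegeneracy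
    intro f hf
    by_contra hne
    have : ∃ g₀ : G, (f : G → W) g₀ ≠ 0 := by
      by_contra h
      push_neg at h
      exact hne (Subtype.ext (funext h))
    obtain ⟨g₀, hg₀⟩ := this
    have : ∃ w : W, B ((f : G → W) g₀) w ≠ 0 := by
      by_contra h
      push_neg at h
      exact hg₀ (hnondeg _ h)
    obtain ⟨w, hw⟩ := this
    -- build f' supported on the coset K g₀
    set F : G → W := fun x => if h : x * g₀⁻¹ ∈ K then ρ ⟨x * g₀⁻¹, h⟩ w else 0 with hF
    have hFmem : F ∈ inducedSubmodule K ρ := by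
      intro k x
      by_cases h : x * g₀⁻¹ ∈ K
      · have h' : (k : G) * x * g₀⁻¹ ∈ K := by
          rw [mul_assoc]; exact K.mul_mem k.2 h
        have : (⟨(k : G) * x * g₀⁻¹, h'⟩ : K) = k * ⟨x * g₀⁻¹, h⟩ := by
          ext; simp [mul_assoc]
        simp only [hF, dif_pos h, dif_pos h', this, map_mul]
        rfl
      · have h' : ¬ ((k : G) * x * g₀⁻¹ ∈ K) := by
          rw [mul_assoc]
          intro hc
          exact h (by simpa using K.mul_mem (K.inv_mem k.2) hc)
        simp [hF, dif_neg h, dif_neg h']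
    have hBt := hf ⟨F, hFmem⟩
    simp only [LinearMap.mk₂_apply] at hBt
    have hsum : S f ⟨F, hFmem⟩ = φ f ⟨F, hFmem⟩ g₀ := by
      show (∑ q, ψ f ⟨F, hFmem⟩ q) = φ f ⟨F, hFmem⟩ g₀
      rw [Finset.sum_eq_single (Quotient.mk _ g₀ : Quotient (QuotientGroup.rightRel K))
        ?_ ?_]
      · exact rfl
      · intro q _ hq
        induction q using Quotient.inductionOn with
        | h a =>
          have ha : ¬ (a * g₀⁻¹ ∈ K) := by
            intro hc
            exact hq (Quotient.sound (QuotientGroup.rightRel_apply.mpr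
              (by simpa using K.inv_mem hc)))
          simp [hψdef, hφdef, hF, dif_neg ha]
      · intro h; exact absurd (Finset.mem_univ _) h
    have hFg₀ : F g₀ = w := by
      have h1 : g₀ * g₀⁻¹ ∈ K := by simpa using K.one_mem
      have h2 : (⟨g₀ * g₀⁻¹, h1⟩ : K) = 1 := by ext; simp
      calc F g₀ = ρ ⟨g₀ * g₀⁻¹, h1⟩ w := dif_pos h1
        _ = ρ 1 w := by rw [h2]
        _ = w := by simp
    rw [hBt] at hsum
    have : φ f ⟨F, hFmem⟩ g₀ ≠ 0 := by
      simp only [hφdef, hFg₀]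
      exact mul_ne_zero (inv_ne_zero (hα g₀)) hw
    exact this hsum.symm
  · -- alternating
    intro f
    simp only [LinearMap.mk₂_apply, hSdef]
    refine Finset.sum_eq_zero fun q _ => ?_
    induction q using Quotient.inductionOn with
    | h a => simp [hψdef, hφdef, halt]
  · -- equivariance
    intro g f f'
    simp only [LinearMap.mk₂_apply, hSdef, Finset.mul_sum]
    set e : Quotient (QuotientGroup.rightRel K) ≃ Quotient (QuotientGroup.rightRel K) :=
      Quotient.congr (Equiv.mulRight g) (fun a b => by
        simp only [QuotientGroup.rightRel_apply, Equiv.coe_mulRight, mul_inv_rev]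
        rw [show b * g * (g⁻¹ * a⁻¹) = b * a⁻¹ by group]) with he_def
    rw [← Equiv.sum_comp e (fun q => (α g : ℂ) * ψ f f' q)]
    refine Finset.sum_congr rfl fun q _ => ?_
    induction q using Quotient.inductionOn with
    | h a =>
      have he : e (Quotient.mk _ a) = Quotient.mk _ (a * g) := rfl
      rw [he]
      simp only [hψdef, hφdef, Quotient.liftOn_mk]
      show ((α a : ℂ))⁻¹ * B ((f : G → W) (a * g)) ((f' : G → W) (a * g)) =
        (α g : ℂ) * (((α (a * g) : ℂ))⁻¹ *
          B ((f : G → W) (a * g)) ((f' : G → W) (a * g)))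
      rw [map_mul, Units.val_mul, mul_inv]
      field_simp
end

section
/- Let G be a group, K a subgroup of G of finite index, α : G → ℂˣ a character of G, and (ρ, W) a representation of K on a finite-dimensional complex vector space W. Let V = { f : G → W | f(kg) = ρ(k)(f(g)) for all k ∈ K, g ∈ G } be the induced representation of ρ to G, on which G acts by (σ(g)f)(x) = f(xg). If B is a nondegenerate symmetric bilinear form on W satisfying B(ρ(k)w, ρ(k)w') = α(k)·B(w,w') for all k ∈ K and w, w' ∈ W, then there exists a nondegenerate symmetric bilinear form B̃ on V satisfying B̃(σ(g)f, σ(g)f') = α(g)·B̃(f,f') for all g ∈ G and f, f' ∈ V. (This is the α-orthogonal case of Lemma 'lemma ref' of the paper: induction from a finite-index subgroup preserves α-orthogonality.) -/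
/-- **Lemma (induction preserves `α`-orthogonality).** Let `K` be a finite-index subgroup of a
group `G`, `α : G → ℂˣ` a character, and `(ρ, W)` a finite-dimensional complex representation
of `K` carrying a nondegenerate symmetric `α|_K`-equivariant bilinear form `B`. Then the
induced representation of `G` carries a nondegenerate symmetric `α`-equivariant bilinear
form. -/
theorem induced_orthogonal
    {G : Type*} [Group G] (K : Subgroup G) (hK : K.FiniteIndex)
    {W : Type*} [AddCommGroup W] [Module ℂ W] [FiniteDimensional ℂ W]
    (ρ : K →* (W ≃ₗ[ℂ] W)) (α : G →* ℂˣ)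
    (B : W →ₗ[ℂ] W →ₗ[ℂ] ℂ)
    (hnondeg : ∀ w : W, (∀ w' : W, B w w' = 0) → w = 0)
    (hsymm : ∀ w w' : W, B w w' = B w' w)
    (hequiv : ∀ (k : K) (w w' : W), B (ρ k w) (ρ k w') = (α (k : G) : ℂ) * B w w') :
    ∃ Bt : inducedSubmodule K ρ →ₗ[ℂ] inducedSubmodule K ρ →ₗ[ℂ] ℂ,
      (∀ f : inducedSubmodule K ρ, (∀ f' : inducedSubmodule K ρ, Bt f f' = 0) → f = 0) ∧
      (∀ f f' : inducedSubmodule K ρ, Bt f f' = Bt f' f) ∧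
      (∀ (g : G) (f f' : inducedSubmodule K ρ),
        Bt (inducedAction K ρ g f) (inducedAction K ρ g f') = (α g : ℂ) * Bt f f') := by
  classical
  haveI : Finite (G ⧸ K) := K.finite_quotient_of_finiteIndex
  haveI : Finite (Quotient (QuotientGroup.rightRel K)) :=
    Finite.of_equiv _ (QuotientGroup.quotientRightRelEquivQuotientLeftRel K).symm
  haveI : Fintype (Quotient (QuotientGroup.rightRel K)) := Fintype.ofFinite _
  set Q := Quotient (QuotientGroup.rightRel K)
  have hwd : ∀ (f f' : inducedSubmodule K ρ) (x y : G),
      (QuotientGroup.rightRel K) x y →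
      ((α x)⁻¹ : ℂˣ) * B ((f : G → W) x) ((f' : G → W) x)
        = ((α y)⁻¹ : ℂˣ) * B ((f : G → W) y) ((f' : G → W) y) := by
    intro f f' x y hxy
    rw [QuotientGroup.rightRel_apply] at hxy
    have hy : y = ((⟨y * x⁻¹, hxy⟩ : K) : G) * x := by simp
    have h2 := hequiv ⟨y * x⁻¹, hxy⟩ ((f : G → W) x) ((f' : G → W) x)
    rw [← f.2 ⟨y * x⁻¹, hxy⟩ x, ← f'.2 ⟨y * x⁻¹, hxy⟩ x, ← hy] at h2
    rw [h2]
    have hα : α y = α (y * x⁻¹) * α x := by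
      conv_lhs => rw [hy]
      exact map_mul α _ _
    rw [hα]
    have h1 : (α x : ℂ) ≠ 0 := Units.ne_zero _
    have h3 : (α (y * x⁻¹) : ℂ) ≠ 0 := Units.ne_zero _
    push_cast
    field_simp
  let Φ : inducedSubmodule K ρ → inducedSubmodule K ρ → Q → ℂ := fun f f' =>
    Quotient.lift (fun x => ((α x)⁻¹ : ℂˣ) * B ((f : G → W) x) ((f' : G → W) x)) (hwd f f')
  refine ⟨LinearMap.mk₂ ℂ (fun f f' => ∑ q : Q, Φ f f' q) ?_ ?_ ?_ ?_, ?_, ?_, ?_⟩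
  · intro f g h
    rw [← Finset.sum_add_distrib]
    refine Finset.sum_congr rfl fun q _ => ?_
    induction q using Quotient.inductionOn with
    | h x => simp [Φ, mul_add]
  · intro c f g
    rw [Finset.smul_sum]
    refine Finset.sum_congr rfl fun q _ => ?_
    induction q using Quotient.inductionOn with
    | h x => simp [Φ, smul_eq_mul]; ring
  · intro f g h
    rw [← Finset.sum_add_distrib]
    refine Finset.sum_congr rfl fun q _ => ?_
    induction q using Quotient.inductionOn with
    | h x => simp [Φ, mul_add]
  · intro c f g
    rw [Finset.smul_sum]
    refine Finset.sum_congr rfl fun q _ => ?_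
    induction q using Quotient.inductionOn with
    | h x => simp [Φ, smul_eq_mul]; ring
  · -- nondegeneracy
    intro f hf
    ext x
    simp only [Submodule.coe_zero, Pi.zero_apply]
    refine hnondeg _ fun w' => ?_
    set F : G → W := fun y => if h : y * x⁻¹ ∈ K then ρ ⟨y * x⁻¹, h⟩ w' else 0 with hF
    have hFmem : F ∈ inducedSubmodule K ρ := by
      intro k y
      by_cases h : y * x⁻¹ ∈ K
      · have h2 : (k : G) * y * x⁻¹ ∈ K := by
          have := K.mul_mem k.2 h
          simpa [mul_assoc] using this
        have key : (⟨(k:G) * y * x⁻¹, h2⟩ : K) = k * ⟨y * x⁻¹, h⟩ := by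
          ext; simp [mul_assoc]
        simp only [hF]
        rw [dif_pos (show (k:G) * y * x⁻¹ ∈ K from h2), dif_pos h]
        have := congrArg (fun u => (ρ u) w') key
        simp only [map_mul] at this
        exact this
      · have h2 : ¬ ((k : G) * y * x⁻¹ ∈ K) := by
          intro hc
          exact h (by simpa [mul_assoc] using K.mul_mem (K.inv_mem k.2) hc)
        simp only [hF]
        rw [dif_neg h2, dif_neg h]
        simp
    have h0 := hf ⟨F, hFmem⟩
    rw [LinearMap.mk₂_apply] at h0
    have hsum : ∑ q : Q, Φ f ⟨F, hFmem⟩ q = ((α x)⁻¹ : ℂˣ) * B ((f : G → W) x) w' := by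
      rw [Finset.sum_eq_single (Quotient.mk _ x)]
      · show ((α x)⁻¹ : ℂˣ) * B ((f : G → W) x) (F x) = _
        have hFx : F x = w' := by
          simp only [hF]
          rw [dif_pos (show x * x⁻¹ ∈ K by simp [K.one_mem])]
          have : (⟨x * x⁻¹, by simp [K.one_mem]⟩ : K) = 1 := by ext; simp
          rw [this]; simp
        rw [hFx]
      · intro q _ hq
        induction q using Quotient.inductionOn with
        | h y =>
          show ((α y)⁻¹ : ℂˣ) * B ((f : G → W) y) (F y) = 0
          have hFy : F y = 0 := by
            simp only [hF]
            rw [dif_neg]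
            intro hc
            exact hq (Quotient.sound (QuotientGroup.rightRel_apply.mpr
              (by simpa using K.inv_mem hc)))
          rw [hFy]; simp
      · intro h; exact absurd (Finset.mem_univ _) h
    rw [h0] at hsum
    have := hsum.symm
    rcases mul_eq_zero.mp this with h | h
    · exact absurd h (Units.ne_zero _)
    · exact h
  · intro f f'
    refine Finset.sum_congr rfl fun q _ => ?_
    induction q using Quotient.inductionOn with
    | h x => simp [Φ, hsymm]
  · -- equivariance
    intro g f f'
    simp only [LinearMap.mk₂_apply]
    rw [Finset.mul_sum]
    let e : Q ≃ Q := Quotient.congr (Equiv.mulRight g) (by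
      intro a b
      rw [QuotientGroup.rightRel_apply, QuotientGroup.rightRel_apply]
      simp [mul_assoc])
    refine Fintype.sum_equiv e _ _ ?_
    intro q
    induction q using Quotient.inductionOn with
    | h x =>
      have he : e (Quotient.mk _ x) = Quotient.mk _ (x * g) := rfl
      rw [he]
      show ((α x)⁻¹ : ℂˣ) * B ((f : G → W) (x * g)) ((f' : G → W) (x * g))
        = (α g : ℂ) * (((α (x * g))⁻¹ : ℂˣ) * B ((f : G → W) (x * g)) ((f' : G → W) (x * g)))
      have h1 : (α (x*g) : ℂ) ≠ 0 := Units.ne_zero _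
      have h2 : (α x : ℂ) ≠ 0 := Units.ne_zero _
      have h3 : (α g : ℂ) ≠ 0 := Units.ne_zero _
      have hm : α (x * g) = α x * α g := map_mul α _ _
      rw [hm]
      push_cast
      field_simp
end

section
/- Let k ⊆ K be an extension of finite fields of degree n ≥ 4, with |k| = q odd, and let χ : Kˣ → ℂˣ be a regular character, i.e. χ ∘ σ ≠ χ for every non-identity field automorphism σ of K fixing k. Then there is no character α : kˣ → ℂˣ with χ² = α ∘ N_{K/k}, i.e. no α such that χ(x)² = α(N_{K/k}(x)) for all x ∈ Kˣ, where N_{K/k} is the field norm. (This is the step in the proof of Corollary 'corollary distinguished determines restriction to L0' of the paper ruling out the trivial Galois element: χ² = α ∘ N would force χ^{2(q−1)} = 1, hence χ^{q²−1} = 1, contradicting regularity since n ≥ 4.) -/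
/-- **No square root of a norm-inflated character for regular characters.** Let `k ⊆ K` be an
extension of finite fields of degree `n ≥ 4` with `|k| = q` odd, and let `χ : Kˣ → ℂˣ` be a
regular character, i.e. `χ ∘ σ ≠ χ` for every non-identity `k`-algebra automorphism `σ` of
`K`. Then there is no character `α : kˣ → ℂˣ` with `χ² = α ∘ N_{K/k}`, where `N_{K/k}` is
the field norm. -/
theorem not_exists_sq_eq_norm_comp_of_regular
    {k K : Type*} [Field k] [Field K] [Fintype k] [Fintype K] [Algebra k K]
    (hn : 4 ≤ Module.finrank k K) (hq : Odd (Fintype.card k))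
    (χ : Kˣ →* ℂˣ)
    (hreg : ∀ σ : K ≃ₐ[k] K, σ ≠ AlgEquiv.refl →
      χ.comp (Units.map (σ : K →* K)) ≠ χ) :
    ¬ ∃ α : kˣ →* ℂˣ, ∀ x : Kˣ, (χ x) ^ 2 = α (Units.map (Algebra.norm k : K →* k) x) := by
  classical
  rintro ⟨α, hα⟩
  have hq2 : 2 ≤ Fintype.card k := Fintype.one_lt_card
  have h1 : 1 ≤ Fintype.card k ^ 2 := Nat.one_le_pow _ _ (by omega)
  -- characteristic setup
  obtain ⟨p, hchar⟩ := CharP.exists k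
  haveI : CharP k p := hchar
  obtain ⟨r, hp, hcard⟩ := FiniteField.card k p
  haveI : CharP K p := charP_of_injective_algebraMap (algebraMap k K).injective p
  haveI : Fact p.Prime := ⟨hp⟩
  haveI := ExpChar.prime (R := K) hp
  -- the k-algebra automorphism x ↦ x ^ q ^ 2
  have hq2pow : Fintype.card k ^ 2 = p ^ (2 * (r : ℕ)) := by
    rw [hcard, ← pow_mul, mul_comm]
  let ψ : K →ₐ[k] K :=
    { iterateFrobenius K p (2 * (r : ℕ)) with
      commutes' := fun a => by
        show (algebraMap k K a) ^ p ^ (2 * (r : ℕ)) = algebraMap k K a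
        rw [← map_pow, ← hq2pow, FiniteField.pow_card_pow] }
  have hψ : ∀ x : K, ψ x = x ^ Fintype.card k ^ 2 := fun x => by
    show iterateFrobenius K p (2 * (r : ℕ)) x = _
    rw [iterateFrobenius_def, hq2pow]
  have hbij : Function.Bijective ψ :=
    (Finite.injective_iff_bijective).1 ψ.toRingHom.injective
  let σ : K ≃ₐ[k] K := AlgEquiv.ofBijective ψ hbij
  -- σ ≠ refl
  have hne : σ ≠ AlgEquiv.refl := by
    intro h
    obtain ⟨g, hg⟩ := IsCyclic.exists_generator (α := Kˣ)
    have horder : orderOf g = Fintype.card K - 1 := by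
      rw [orderOf_eq_card_of_forall_mem_zpowers hg, Nat.card_eq_fintype_card,
        Fintype.card_units]
    have hgeq : (g : K) ^ Fintype.card k ^ 2 = (g : K) := by
      have := congrArg (fun e : K ≃ₐ[k] K => e (g : K)) h
      simpa [σ, hψ] using this
    have hgpow : g ^ Fintype.card k ^ 2 = g := Units.ext (by push_cast [hgeq]; rfl)
    have hone : g ^ (Fintype.card k ^ 2 - 1) = 1 := by
      have hs : Fintype.card k ^ 2 - 1 + 1 = Fintype.card k ^ 2 := Nat.sub_add_cancel h1
      rw [← hs, pow_succ] at hgpow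
      exact mul_right_cancel (a := g ^ (Fintype.card k ^ 2 - 1)) (c := 1)
        (by rw [hgpow, one_mul])
    have hdvd : Fintype.card K - 1 ∣ Fintype.card k ^ 2 - 1 :=
      horder ▸ orderOf_dvd_of_pow_eq_one hone
    have hcardK : Fintype.card K = Fintype.card k ^ Module.finrank k K :=
      Module.card_eq_pow_finrank (K := k)
    have hlt : Fintype.card k ^ 2 - 1 < Fintype.card K - 1 := by
      have : Fintype.card k ^ 2 < Fintype.card k ^ Module.finrank k K :=
        pow_lt_pow_right₀ hq2 (by omega)
      omega
    have hpos : 0 < Fintype.card k ^ 2 - 1 := by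
      have : 2 ≤ Fintype.card k ^ 2 := le_trans hq2 (Nat.le_self_pow two_ne_zero _)
      omega
    exact absurd (Nat.le_of_dvd hpos hdvd) (by omega)
  -- χ ∘ σ = χ
  refine hreg σ hne (MonoidHom.ext fun x => ?_)
  have hx1 : (χ x) ^ (2 * (Fintype.card k - 1)) = 1 := by
    have hnorm : (Units.map (Algebra.norm k : K →* k) x) ^ (Fintype.card k - 1) = 1 := by
      rw [← Fintype.card_units]; exact pow_card_eq_one
    calc (χ x) ^ (2 * (Fintype.card k - 1)) = ((χ x) ^ 2) ^ (Fintype.card k - 1) := by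
          rw [← pow_mul]
      _ = (α (Units.map (Algebra.norm k : K →* k) x)) ^ (Fintype.card k - 1) := by rw [hα x]
      _ = α ((Units.map (Algebra.norm k : K →* k) x) ^ (Fintype.card k - 1)) := by rw [map_pow]
      _ = 1 := by rw [hnorm, map_one]
  have hx2 : (χ x) ^ (Fintype.card k ^ 2 - 1) = 1 := by
    obtain ⟨m, hm⟩ := hq
    have he : Fintype.card k ^ 2 - 1 = 2 * (Fintype.card k - 1) * (m + 1) := by
      have h2 : Fintype.card k ^ 2 = 2 * (2 * m) * (m + 1) + 1 := by rw [hm]; ring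
      have hsub : Fintype.card k - 1 = 2 * m := by omega
      rw [hsub]
      omega
    rw [he, pow_mul, hx1, one_pow]
  show χ (Units.map (σ : K →* K) x) = χ x
  have hσx : Units.map (σ : K →* K) x = x ^ Fintype.card k ^ 2 := by
    ext
    push_cast
    exact hψ x
  rw [hσx, map_pow]
  calc (χ x) ^ Fintype.card k ^ 2 = (χ x) ^ (Fintype.card k ^ 2 - 1 + 1) := by
        rw [Nat.sub_add_cancel h1]
    _ = (χ x) ^ (Fintype.card k ^ 2 - 1) * χ x := pow_succ _ _
    _ = χ x := by rw [hx2, one_mul]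
end
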